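/- There is no Clifford system of 7 elements on the Euclidean space ℝ^8; that is, there do not exist seven self-adjoint linear endomorphisms P_0, …, P_6 of EuclideanSpace ℝ (Fin 8) with P_α ∘ P_α = Id for every α and P_α ∘ P_β = −P_β ∘ P_α whenever α ≠ β. -/

import Mathlib

open scoped RealInnerProductSpace

section CliffordAux

variable {R : Type*} [Ring R]

/-- Helper: `(-1)^n` is central. -/
private lemma neg_one_pow_comm' (n : ℕ) (x : R) : x * (-1 : R) ^ n = (-1 : R) ^ n * x :=
  ((Commute.neg_one_left x).pow_left n).symm

private lemma quad_assoc (x y : R) : x * ((x * y) * y) = (x * x) * (y * y) := by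
  rw [← mul_assoc, ← mul_assoc, mul_assoc]

private lemma neg_one_pow_mul_assoc (n : ℕ) (x y : R) :
    x * ((-1 : R) ^ n * y) = (-1 : R) ^ n * (x * y) := by
  rw [← mul_assoc, neg_one_pow_comm', mul_assoc]

variable (P : Fin 7 → R)

/-- L1: moving `P a` through a product of anticommuting factors. -/
lemma cliff_comm
    (hanti : ∀ α β, α ≠ β → P α * P β = -(P β * P α)) :
    ∀ (l : List (Fin 7)) (a : Fin 7), a ∉ l →
      P a * (l.map P).prod = (-1 : R) ^ l.length * ((l.map P).prod * P a) := by
  intro l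
  induction l with
  | nil => intro a _; simp
  | cons b l ih =>
    intro a ha
    simp only [List.mem_cons, not_or] at ha
    obtain ⟨hab, hal⟩ := ha
    simp only [List.map_cons, List.prod_cons, List.length_cons]
    calc P a * (P b * (l.map P).prod)
        = (P a * P b) * (l.map P).prod := by rw [mul_assoc]
      _ = -(P b * P a) * (l.map P).prod := by rw [hanti a b hab]
      _ = -(P b * (P a * (l.map P).prod)) := by rw [neg_mul, mul_assoc]
      _ = -(P b * ((-1 : R) ^ l.length * ((l.map P).prod * P a))) := by rw [ih a hal]
      _ = -((-1 : R) ^ l.length * (P b * ((l.map P).prod * P a))) := by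
          rw [neg_one_pow_mul_assoc]
      _ = (-1 : R) ^ (l.length + 1) * (P b * (l.map P).prod * P a) := by
          rw [pow_succ]; noncomm_ring

/-- Variant of L1 with the factor moved the other way. -/
lemma cliff_comm'
    (hanti : ∀ α β, α ≠ β → P α * P β = -(P β * P α))
    (l : List (Fin 7)) (a : Fin 7) (ha : a ∉ l) :
    (l.map P).prod * P a = (-1 : R) ^ l.length * (P a * (l.map P).prod) := by
  rw [cliff_comm P hanti l a ha, ← mul_assoc, ← pow_add]
  rw [Even.neg_one_pow ⟨l.length, rfl⟩, one_mul]

/-- L0: product of `if σ i then P i else 1` equals product over the filtered list. -/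
lemma cliff_filter (σ : Fin 7 → Bool) :
    ∀ l : List (Fin 7),
      (l.map fun i => if σ i then P i else 1).prod = ((l.filter σ).map P).prod := by
  intro l
  induction l with
  | nil => simp
  | cons a l ih =>
    by_cases h : σ a
    · simp [List.filter_cons, h, ih]
    · simp only [Bool.not_eq_true] at h
      simp [List.filter_cons, h, ih]

/-- L1': moving a factor (which is `1` or `P a`) through a masked product, up to sign. -/
lemma cliff_comm_sign
    (hanti : ∀ α β, α ≠ β → P α * P β = -(P β * P α))
    (σ τ : Fin 7 → Bool) (l : List (Fin 7)) (a : Fin 7) (ha : a ∉ l) :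
    (l.map fun i => if σ i then P i else 1).prod * (if τ a then P a else 1)
      = (if τ a then P a else 1) * (l.map fun i => if σ i then P i else 1).prod ∨
    (l.map fun i => if σ i then P i else 1).prod * (if τ a then P a else 1)
      = -((if τ a then P a else 1) * (l.map fun i => if σ i then P i else 1).prod) := by
  by_cases h : τ a
  · simp only [h, if_true]
    rw [cliff_filter]
    have ha' : a ∉ l.filter σ := fun hm => ha (List.mem_of_mem_filter hm)
    have key := cliff_comm' P hanti (l.filter σ) a ha'
    rcases Nat.even_or_odd (l.filter σ).length with he | ho
    · left
      rw [key, he.neg_one_pow, one_mul]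
    · right
      rw [key, ho.neg_one_pow, neg_one_mul]
  · simp [h]

/-- L2: products multiply to `±` the product indexed by the XOR. -/
lemma cliff_mul
    (hsq : ∀ α, P α * P α = 1)
    (hanti : ∀ α β, α ≠ β → P α * P β = -(P β * P α)) :
    ∀ (l : List (Fin 7)), l.Nodup → ∀ σ τ : Fin 7 → Bool,
      (l.map fun i => if σ i then P i else 1).prod * (l.map fun i => if τ i then P i else 1).prod
        = (l.map fun i => if xor (σ i) (τ i) then P i else 1).prod ∨
      (l.map fun i => if σ i then P i else 1).prod * (l.map fun i => if τ i then P i else 1).prod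
        = -(l.map fun i => if xor (σ i) (τ i) then P i else 1).prod := by
  intro l
  induction l with
  | nil => intro _ σ τ; left; simp
  | cons a l ih =>
    intro hnd σ τ
    have hal : a ∉ l := (List.nodup_cons.mp hnd).1
    have hl : l.Nodup := (List.nodup_cons.mp hnd).2
    simp only [List.map_cons, List.prod_cons]
    set Aσ := (l.map fun i => if σ i then P i else 1).prod with hAσ
    set Aτ := (l.map fun i => if τ i then P i else 1).prod with hAτ
    set AΔ := (l.map fun i => if xor (σ i) (τ i) then P i else 1).prod with hAΔ
    have hfuse : (if σ a then P a else 1) * (if τ a then P a else 1)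
        = (if xor (σ a) (τ a) then P a else 1) := by
      cases hσ : σ a <;> cases hτ : τ a <;> simp [hsq a]
    have hstep : (if σ a then P a else 1) * Aσ * ((if τ a then P a else 1) * Aτ)
        = (if σ a then P a else 1) * (Aσ * (if τ a then P a else 1)) * Aτ := by
      rw [mul_assoc, mul_assoc, mul_assoc]
    rw [hstep]
    rcases cliff_comm_sign P hanti σ τ l a hal with hc | hc
    · rw [hc, ← mul_assoc, hfuse]
      rcases ih hl σ τ with hih | hih
      · left; rw [mul_assoc, hih]
      · right; rw [mul_assoc, hih, mul_neg]
    · rw [hc, mul_neg, neg_mul, ← mul_assoc, hfuse]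
      rcases ih hl σ τ with hih | hih
      · right; rw [mul_assoc, hih]
      · left; rw [mul_assoc, hih, mul_neg, neg_neg]

/-- L3: the exact sign of the square of a product of distinct generators. -/
lemma cliff_sq
    (hsq : ∀ α, P α * P α = 1)
    (hanti : ∀ α β, α ≠ β → P α * P β = -(P β * P α)) :
    ∀ (l : List (Fin 7)), l.Nodup →
      (l.map P).prod * (l.map P).prod = (-1 : R) ^ (l.length.choose 2) := by
  intro l
  induction l with
  | nil => simp
  | cons a l ih =>
    intro hnd
    have hal : a ∉ l := (List.nodup_cons.mp hnd).1
    have hl : l.Nodup := (List.nodup_cons.mp hnd).2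
    simp only [List.map_cons, List.prod_cons, List.length_cons]
    set A := (l.map P).prod with hA
    have key := cliff_comm' P hanti l a hal
    calc P a * A * (P a * A)
        = P a * ((A * P a) * A) := by noncomm_ring
      _ = P a * (((-1 : R) ^ l.length * (P a * A)) * A) := by rw [key]
      _ = P a * ((-1 : R) ^ l.length * ((P a * A) * A)) := by rw [mul_assoc]
      _ = (-1 : R) ^ l.length * (P a * ((P a * A) * A)) := by rw [neg_one_pow_mul_assoc]
      _ = (-1 : R) ^ l.length * ((P a * P a) * (A * A)) := by rw [quad_assoc]
      _ = (-1 : R) ^ l.length * (A * A) := by rw [hsq a, one_mul]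
      _ = (-1 : R) ^ l.length * (-1 : R) ^ (l.length.choose 2) := by rw [ih hl]
      _ = (-1 : R) ^ ((l.length + 1).choose 2) := by
          rw [← pow_add]
          congr 1
          rw [Nat.choose_succ_succ, Nat.choose_one_right, Nat.add_comm]

/-- L5: a reversed product telescopes against the product. -/
lemma cliff_rev_prod (hsq : ∀ α, P α * P α = 1) :
    ∀ l : List (Fin 7), (l.reverse.map P).prod * (l.map P).prod = 1 := by
  intro l
  induction l with
  | nil => simp
  | cons a l ih =>
    simp only [List.reverse_cons, List.map_append, List.map_cons, List.prod_cons,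
      List.prod_append, List.map_nil, List.prod_nil, mul_one]
    calc (l.reverse.map P).prod * P a * (P a * (l.map P).prod)
        = (l.reverse.map P).prod * ((P a * P a) * (l.map P).prod) := by
          rw [mul_assoc, ← mul_assoc (P a)]
      _ = (l.reverse.map P).prod * (l.map P).prod := by rw [hsq a, one_mul]
      _ = 1 := ih

end CliffordAux

section CliffordTrace

open LinearMap

local notation "V" => EuclideanSpace ℝ (Fin 8)

variable (P : Fin 7 → (V →ₗ[ℝ] V))

/-- Trace of the star (adjoint) equals the trace, on real Euclidean space. -/
lemma trace_star_eq (A : V →ₗ[ℝ] V) : trace ℝ V (star A) = trace ℝ V A := by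
  have b := EuclideanSpace.basisFun (Fin 8) ℝ
  rw [star_eq_adjoint]
  rw [trace_eq_matrix_trace ℝ b.toBasis, trace_eq_matrix_trace ℝ b.toBasis,
    LinearMap.toMatrix_adjoint, Matrix.trace_conjTranspose, star_trivial]

/-- Star of a product of self-adjoint operators is the reversed product. -/
lemma star_list_prod (hP : ∀ α, star (P α) = P α) :
    ∀ l : List (Fin 7), star ((l.map P).prod) = (l.reverse.map P).prod := by
  intro l
  induction l with
  | nil => simp
  | cons a l ih =>
    simp only [List.map_cons, List.prod_cons, List.reverse_cons, List.map_append,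
      List.prod_append, List.map_nil, List.map_cons, List.prod_cons, List.prod_nil, mul_one]
    rw [star_mul, ih, hP a]

/-- L4: the trace of a nonempty product of distinct generators vanishes. -/
lemma cliff_trace_zero
    (hP : ∀ α, star (P α) = P α)
    (hsq : ∀ α, P α * P α = 1)
    (hanti : ∀ α β, α ≠ β → P α * P β = -(P β * P α)) :
    ∀ l : List (Fin 7), l.Nodup → l ≠ [] → trace ℝ V ((l.map P).prod) = 0 := by
  intro l hnd hne
  rcases Nat.even_or_odd l.length with he | ho
  · -- even length: conjugate by the head
    rcases l with _ | ⟨j, l'⟩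
    · exact absurd rfl hne
    have hjl : j ∉ l' := (List.nodup_cons.mp hnd).1
    have hodd : Odd l'.length := by
      rcases he with ⟨k, hk⟩
      simp only [List.length_cons] at hk
      exact ⟨k - 1, by omega⟩
    have key := cliff_comm P hanti l' j hjl
    rw [hodd.neg_one_pow, neg_one_mul] at key
    have h2 : (l'.map P).prod * P j = -(P j * (l'.map P).prod) := by
      rw [key, neg_neg]
    simp only [List.map_cons, List.prod_cons]
    have := trace_mul_comm ℝ (P j) ((l'.map P).prod)
    rw [h2, map_neg] at this
    linarith
  · -- odd length
    by_cases hex : ∃ a, a ∉ l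
    · obtain ⟨a, ha⟩ := hex
      have key := cliff_comm P hanti l a ha
      rw [ho.neg_one_pow, neg_one_mul] at key
      set A := (l.map P).prod with hA
      have h1 : trace ℝ V A = trace ℝ V ((A * P a) * P a) := by
        rw [mul_assoc, hsq a, mul_one]
      have h2 : trace ℝ V ((A * P a) * P a) = trace ℝ V (P a * (A * P a)) :=
        trace_mul_comm ℝ _ _
      have h3 : P a * (A * P a) = -(A * (P a * P a)) := by
        rw [← mul_assoc, key, neg_mul, mul_assoc]
      rw [h3, hsq a, mul_one, map_neg] at h2
      linarith [h1, h2]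
    · -- no element outside: the list has all 7 elements, use the adjoint argument
      push_neg at hex
      have hlen : l.length = 7 := by
        have h1 : l.toFinset = Finset.univ := by
          apply Finset.eq_univ_of_forall
          intro x
          simpa using hex x
        have h2 := List.toFinset_card_of_nodup hnd
        rw [h1] at h2
        simpa using h2.symm
      set A := (l.map P).prod with hA
      have hstar : star A = (l.reverse.map P).prod := star_list_prod P hP l
      have htel : star A * A = 1 := by rw [hstar]; exact cliff_rev_prod P hsq l
      have hsqA : A * A = -1 := by
        have h3 := cliff_sq P hsq hanti l hnd
        rw [hlen] at h3
        have h21 : Nat.choose 7 2 = 21 := by decide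
        rw [h21] at h3
        exact h3.trans (Odd.neg_one_pow ⟨10, by norm_num⟩)
      have hstarA : star A = -A := by
        have h4 : A * (-A) = 1 := by rw [mul_neg, hsqA, neg_neg]
        calc star A = star A * (A * (-A)) := by rw [h4, mul_one]
          _ = (star A * A) * (-A) := by rw [mul_assoc]
          _ = -A := by rw [htel, one_mul]
      have := trace_star_eq A
      rw [hstarA, map_neg] at this
      linarith

end CliffordTrace

/-- There is no Clifford system of 7 elements on the Euclidean space `ℝ^8`:
there do not exist seven self-adjoint endomorphisms `P 0, …, P 6` of
`EuclideanSpace ℝ (Fin 8)` squaring to the identity and pairwise anti-commuting. -/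
theorem no_cliffordSystem_seven_elements_on_R8 :
    ¬ ∃ P : Fin 7 → (EuclideanSpace ℝ (Fin 8) →ₗ[ℝ] EuclideanSpace ℝ (Fin 8)),
      (∀ α, ∀ x y : EuclideanSpace ℝ (Fin 8), ⟪P α x, y⟫ = ⟪x, P α y⟫) ∧
      (∀ α, P α ∘ₗ P α = LinearMap.id) ∧
      (∀ α β, α ≠ β → P α ∘ₗ P β = -(P β ∘ₗ P α)) := by
  rintro ⟨P, hsym, hsq0, hanti0⟩
  set V := EuclideanSpace ℝ (Fin 8)
  have hfr : Module.finrank ℝ V = 8 := finrank_euclideanSpace_fin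
  have hsq : ∀ α, P α * P α = 1 := fun α => hsq0 α
  have hanti : ∀ α β, α ≠ β → P α * P β = -(P β * P α) := fun α β h => hanti0 α β h
  have hP : ∀ α, star (P α) = P α := by
    intro α
    exact (LinearMap.isSymmetric_iff_isSelfAdjoint (P α)).mp (hsym α)
  -- the 128 products indexed by masks
  set L : List (Fin 7) := List.finRange 7 with hL
  have hLnd : L.Nodup := List.nodup_finRange 7
  set E : (Fin 7 → Bool) → (V →ₗ[ℝ] V) :=
    fun σ => (L.map fun i => if σ i then P i else 1).prod with hE
  -- trace of E σ * E τ
  have htrace : ∀ σ τ : Fin 7 → Bool, σ ≠ τ →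
      LinearMap.trace ℝ V (E σ * E τ) = 0 := by
    intro σ τ hστ
    have hΔ : (L.filter fun i => xor (σ i) (τ i)) ≠ [] := by
      have : ∃ i, σ i ≠ τ i := by
        by_contra h
        push_neg at h
        exact hστ (funext h)
      obtain ⟨i, hi⟩ := this
      intro hnil
      have : i ∈ L.filter fun j => xor (σ j) (τ j) := by
        rw [List.mem_filter]
        refine ⟨List.mem_finRange i, ?_⟩
        cases hσ : σ i <;> cases hτ : τ i <;> simp_all
      rw [hnil] at this
      exact absurd this List.not_mem_nil
    have hΔnd : (L.filter fun i => xor (σ i) (τ i)).Nodup := hLnd.filter _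
    have h0 := cliff_trace_zero P hP hsq hanti _ hΔnd hΔ
    rcases cliff_mul P hsq hanti L hLnd σ τ with hm | hm
    · rw [hE]
      simp only
      rw [hm, cliff_filter]
      exact h0
    · rw [hE]
      simp only
      rw [hm, map_neg, cliff_filter, h0, neg_zero]
  have htrace_self : ∀ τ : Fin 7 → Bool,
      LinearMap.trace ℝ V (E τ * E τ) = 8 ∨ LinearMap.trace ℝ V (E τ * E τ) = -8 := by
    intro τ
    have hid : (L.map fun i => if xor (τ i) (τ i) then P i else 1).prod = 1 := by
      simp
    rcases cliff_mul P hsq hanti L hLnd τ τ with hm | hm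
    · left
      rw [hE]; simp only
      rw [hm, hid, LinearMap.trace_one]
      norm_num [hfr]
    · right
      rw [hE]; simp only
      rw [hm, hid, map_neg, LinearMap.trace_one]
      norm_num [hfr]
  -- linear independence
  have hli : LinearIndependent ℝ E := by
    rw [Fintype.linearIndependent_iff]
    intro g hg τ
    have hT := congrArg
      (fun X => LinearMap.trace ℝ V (X * E τ)) hg
    rw [zero_mul, map_zero] at hT
    rw [Finset.sum_mul] at hT
    have hsum : ∑ σ : Fin 7 → Bool, LinearMap.trace ℝ V ((g σ • E σ) * E τ)
        = LinearMap.trace ℝ V (0 : V →ₗ[ℝ] V) := by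
      rw [← map_sum, ← Finset.sum_mul, hg, zero_mul]
    rw [map_zero] at hsum
    have hsum2 : ∑ σ : Fin 7 → Bool, g σ * LinearMap.trace ℝ V (E σ * E τ) = 0 := by
      rw [← hsum]
      apply Finset.sum_congr rfl
      intro σ _
      rw [smul_mul_assoc, map_smul, smul_eq_mul]
    rw [Finset.sum_eq_single τ (fun σ _ hσ => by rw [htrace σ τ hσ, mul_zero])
      (fun h => absurd (Finset.mem_univ τ) h)] at hsum2
    rcases htrace_self τ with h8 | h8 <;> rw [h8] at hsum2 <;> linarith
  have hcard := hli.fintype_card_le_finrank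
  rw [Module.finrank_linearMap, hfr] at hcard
  norm_num at hcard
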